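/- arXiv:1106.4325 — 2 statements merged into one kernel-verified Lean document; each statement's English description precedes it below -/
import Mathlib

section
/- In model M, for every n ≥ 0 and s ≥ 1 the s-th moment has the closed form E(W_n^s) = (∏_{j=0}^{n−1} α_{j,s}) · ( W_0^s + Σ_{ℓ=0}^{n−1} β_{ℓ,s} / ∏_{j=0}^{ℓ} α_{j,s} ), where α_{n,s} := Σ_{ℓ=0}^{s} c^ℓ·C(s,ℓ)·C(m,ℓ)/C(T_n,ℓ) and β_{n,s} := Σ_{i=2}^{s} E(W_n^{s+1−i}) · Σ_{ℓ=i}^{s} C(s,ℓ)·c^ℓ · Σ_{j=ℓ+1−i}^{ℓ} (−1)^{j+i−1−ℓ} · S(ℓ,j)·c₁(j, ℓ+1−i)·C(m,j)/C(T_n,j). -/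
open Finset

/-- Total number of balls after `n` draws: `T_n = W_0 + B_0 + n·m·c`. -/
def urnT (W0 B0 m c n : ℕ) : ℕ := W0 + B0 + n * m * c

/-- Probability mass function of the number of white balls after `n` draws in the
Chen–Wei model `M` (at each step `m` balls are drawn without replacement and, for
each drawn ball, `c` balls of the same color are added). -/
noncomputable def massM (W0 B0 m c : ℕ) : ℕ → ℕ → ℝ
  | 0 => fun v => if v = W0 then 1 else 0
  | n + 1 => fun v =>
      ∑ w ∈ Finset.range (urnT W0 B0 m c n + 1), ∑ k ∈ Finset.range (m + 1),
        if v = w + c * k then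
          massM W0 B0 m c n w *
            ((Nat.choose w k * Nat.choose (urnT W0 B0 m c n - w) (m - k) : ℝ) /
              (Nat.choose (urnT W0 B0 m c n) m : ℝ))
        else 0

/-- The `s`-th moment `E(W_n^s)` of the number of white balls in model `M`. -/
noncomputable def momM (W0 B0 m c s n : ℕ) : ℝ :=
  ∑ w ∈ Finset.range (urnT W0 B0 m c n + 1), massM W0 B0 m c n w * (w : ℝ) ^ s

/-- Stirling numbers of the second kind `S(n,k)`. -/
def stirling2 : ℕ → ℕ → ℕ
  | 0, 0 => 1
  | 0, _ + 1 => 0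
  | _ + 1, 0 => 0
  | n + 1, k + 1 => (k + 1) * stirling2 n (k + 1) + stirling2 n k

/-- Unsigned Stirling numbers of the first kind `c₁(n,k)`. -/
def stirling1 : ℕ → ℕ → ℕ
  | 0, 0 => 1
  | 0, _ + 1 => 0
  | _ + 1, 0 => 0
  | n + 1, k + 1 => n * stirling1 n (k + 1) + stirling1 n k

/-- The coefficient `α_{n,s}` of the moment recurrence in model `M`. -/
noncomputable def alphaM (W0 B0 m c n s : ℕ) : ℝ :=
  ∑ ℓ ∈ Finset.range (s + 1),
    (c : ℝ) ^ ℓ * (Nat.choose s ℓ * Nat.choose m ℓ : ℝ) /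
      (Nat.choose (urnT W0 B0 m c n) ℓ : ℝ)

/-- The inhomogeneous term `β_{n,s}` of the moment recurrence in model `M`. -/
noncomputable def betaM (W0 B0 m c n s : ℕ) : ℝ :=
  ∑ i ∈ Finset.Icc 2 s, momM W0 B0 m c (s + 1 - i) n *
    ∑ ℓ ∈ Finset.Icc i s, (Nat.choose s ℓ : ℝ) * (c : ℝ) ^ ℓ *
      ∑ j ∈ Finset.Icc (ℓ + 1 - i) ℓ, (-1 : ℝ) ^ (j + i - 1 - ℓ) *
        (stirling2 ℓ j * stirling1 j (ℓ + 1 - i) * Nat.choose m j : ℝ) /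
        (Nat.choose (urnT W0 B0 m c n) j : ℝ)

lemma stirling2_eq_zero_of_lt : ∀ {n k : ℕ}, n < k → stirling2 n k = 0 := by
  intro n
  induction n with
  | zero => intro k h; cases k with | zero => omega | succ k => rfl
  | succ n ih =>
    intro k h
    cases k with
    | zero => omega
    | succ k =>
      show (k + 1) * stirling2 n (k + 1) + stirling2 n k = 0
      rw [ih (by omega), ih (by omega), Nat.mul_zero]

lemma stirling1_eq_zero_of_lt : ∀ {n k : ℕ}, n < k → stirling1 n k = 0 := by
  intro n
  induction n with
  | zero => intro k h; cases k with | zero => omega | succ k => rfl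
  | succ n ih =>
    intro k h
    cases k with
    | zero => omega
    | succ k =>
      show n * stirling1 n (k + 1) + stirling1 n k = 0
      rw [ih (by omega), ih (by omega), Nat.mul_zero]

lemma stirling1_zero_right (n : ℕ) : stirling1 (n + 1) 0 = 0 := rfl
lemma stirling2_zero_right (n : ℕ) : stirling2 (n + 1) 0 = 0 := rfl

/-- rising factorial expands via unsigned Stirling numbers of the first kind -/
lemma rising_eq (j : ℕ) (x : ℝ) :
    ∏ i ∈ range j, (x + i) = ∑ t ∈ range (j + 1), (stirling1 j t : ℝ) * x ^ t := by
  induction j generalizing x with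
  | zero => simp [stirling1]
  | succ n ih =>
    rw [prod_range_succ, ih]
    have hshift : ∑ t ∈ range (n + 1), (stirling1 n t : ℝ) * x ^ t
        = (∑ t ∈ range (n + 1), (stirling1 n (t + 1) : ℝ) * x ^ (t + 1)) + stirling1 n 0 := by
      have h2 : ∑ t ∈ range (n + 2), (stirling1 n t : ℝ) * x ^ t
          = ∑ t ∈ range (n + 1), (stirling1 n t : ℝ) * x ^ t := by
        rw [sum_range_succ, stirling1_eq_zero_of_lt (show n < n + 1 by omega)]; simp
      rw [← h2, sum_range_succ' (fun t => (stirling1 n t : ℝ) * x ^ t) (n + 1)]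
      simp
    have hz : (n : ℝ) * (stirling1 n 0 : ℝ) = 0 := by
      cases n with
      | zero => simp
      | succ k => simp [stirling1_zero_right]
    rw [sum_range_succ' (fun t => (stirling1 (n + 1) t : ℝ) * x ^ t) (n + 1)]
    have hrec : ∀ t : ℕ, (stirling1 (n + 1) (t + 1) : ℝ)
        = n * stirling1 n (t + 1) + stirling1 n t := by
      intro t; show ((n * stirling1 n (t + 1) + stirling1 n t : ℕ) : ℝ) = _; push_cast; ring
    calc (∑ t ∈ range (n + 1), (stirling1 n t : ℝ) * x ^ t) * (x + n)
        = (∑ t ∈ range (n + 1), (stirling1 n t : ℝ) * x ^ (t + 1))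
          + (n : ℝ) * ∑ t ∈ range (n + 1), (stirling1 n t : ℝ) * x ^ t := by
          rw [mul_add]; congr 1
          · rw [sum_mul]; apply sum_congr rfl; intro t _; ring
          · rw [mul_comm]
      _ = (∑ t ∈ range (n + 1), (stirling1 n t : ℝ) * x ^ (t + 1))
          + (n : ℝ) * ∑ t ∈ range (n + 1), (stirling1 n (t + 1) : ℝ) * x ^ (t + 1) := by
          rw [hshift, mul_add, hz, add_zero]
      _ = ∑ t ∈ range (n + 1), (stirling1 (n + 1) (t + 1) : ℝ) * x ^ (t + 1) := by
          rw [mul_sum, ← sum_add_distrib]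
          apply sum_congr rfl; intro t _; rw [hrec]; ring
      _ = _ := by
          simp [stirling1_zero_right]

lemma cast_descFactorial (w j : ℕ) :
    (w.descFactorial j : ℝ) = ∏ i ∈ range j, ((w : ℝ) - i) := by
  induction j with
  | zero => simp
  | succ j ih =>
    rcases le_or_gt j w with h | h
    · rw [prod_range_succ, ← ih, Nat.descFactorial_succ]; push_cast [h]; ring
    · rw [Nat.descFactorial_eq_zero_iff_lt.mpr (show w < j + 1 by omega)]
      rw [Nat.cast_zero, eq_comm]
      exact prod_eq_zero (mem_range.mpr (show w < j + 1 by omega)) (by simp)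

lemma falling_eq (j : ℕ) (x : ℝ) :
    ∏ i ∈ range j, (x - i) = ∑ t ∈ range (j + 1), (-1 : ℝ) ^ (j + t) * stirling1 j t * x ^ t := by
  have h : ∏ i ∈ range j, (x - i) = (-1 : ℝ) ^ j * ∏ i ∈ range j, (-x + i) := by
    calc ∏ i ∈ range j, (x - i) = ∏ i ∈ range j, (-1 : ℝ) * (-x + i) :=
          prod_congr rfl (by intros; ring)
      _ = (∏ _i ∈ range j, (-1 : ℝ)) * ∏ i ∈ range j, (-x + i) := prod_mul_distrib
      _ = (-1 : ℝ) ^ j * ∏ i ∈ range j, (-x + i) := by rw [prod_const, card_range]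
  rw [h, rising_eq, mul_sum]
  apply sum_congr rfl; intro t _
  rw [neg_pow, pow_add]
  ring

lemma choose_real_shift (k j : ℕ) :
    ((k : ℝ) - j) * (k.choose j) = (j + 1) * (k.choose (j + 1)) := by
  rcases le_or_gt j k with h | h
  · have := Nat.choose_succ_right_eq k j
    have hcast : ((k.choose (j + 1) * (j + 1) : ℕ) : ℝ) = ((k.choose j * (k - j) : ℕ) : ℝ) := by
      exact_mod_cast congrArg (fun n : ℕ => (n : ℝ)) this
    push_cast [h] at hcast
    linarith
  · rw [Nat.choose_eq_zero_of_lt h, Nat.choose_eq_zero_of_lt (by omega)]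
    simp

lemma pow_eq_stirling2_sum (ℓ k : ℕ) :
    (k : ℝ) ^ ℓ = ∑ j ∈ range (ℓ + 1), (stirling2 ℓ j : ℝ) * (j.factorial * k.choose j) := by
  induction ℓ with
  | zero => simp [stirling2]
  | succ n ih =>
    have hrec : ∀ j : ℕ, (stirling2 (n + 1) (j + 1) : ℝ)
        = (j + 1) * stirling2 n (j + 1) + stirling2 n j := by
      intro j; show (((j + 1) * stirling2 n (j + 1) + stirling2 n j : ℕ) : ℝ) = _; push_cast; ring
    have key : ∀ j : ℕ, (k : ℝ) * (j.factorial * k.choose j)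
        = ((j + 1).factorial * k.choose (j + 1)) + j * (j.factorial * k.choose j) := by
      intro j
      have h1 := choose_real_shift k j
      have h2 : ((j + 1).factorial : ℝ) = (j + 1) * j.factorial := by
        rw [Nat.factorial_succ]; push_cast; ring
      rw [h2]
      nlinarith [h1]
    calc (k : ℝ) ^ (n + 1) = (k : ℝ) * ∑ j ∈ range (n + 1), (stirling2 n j : ℝ) * (j.factorial * k.choose j) := by
          rw [← ih, pow_succ]; ring
      _ = ∑ j ∈ range (n + 1), (stirling2 n j : ℝ) *
            (((j + 1).factorial * k.choose (j + 1)) + j * (j.factorial * k.choose j)) := by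
          rw [mul_sum]; apply sum_congr rfl; intro j _; rw [← key]; ring
      _ = (∑ j ∈ range (n + 1), (stirling2 n j : ℝ) * ((j + 1).factorial * k.choose (j + 1)))
          + ∑ j ∈ range (n + 1), (stirling2 n j : ℝ) * (j * (j.factorial * k.choose j)) := by
          rw [← sum_add_distrib]; apply sum_congr rfl; intro j _; ring
      _ = ∑ j ∈ range (n + 2), (stirling2 (n + 1) j : ℝ) * (j.factorial * k.choose j) := by
          rw [sum_range_succ' (fun j => (stirling2 (n + 1) j : ℝ) * (j.factorial * k.choose j)) (n + 1)]
          have hz : (stirling2 (n + 1) 0 : ℝ) * ((0:ℕ).factorial * k.choose 0) = 0 := by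
            simp [stirling2_zero_right]
          rw [hz, add_zero]
          have hsecond : ∑ j ∈ range (n + 1), (stirling2 n j : ℝ) * (j * (j.factorial * k.choose j))
              = ∑ j ∈ range (n + 1), (stirling2 n (j + 1) : ℝ) * ((j + 1) * ((j + 1).factorial * k.choose (j + 1))) := by
            rw [sum_range_succ' (fun j => (stirling2 n j : ℝ) * (j * (j.factorial * k.choose j))) n]
            rw [sum_range_succ (fun j => (stirling2 n (j + 1) : ℝ) * ((j + 1) * ((j + 1).factorial * k.choose (j + 1)))) n]
            rw [stirling2_eq_zero_of_lt (show n < n + 1 by omega)]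
            simp
          rw [hsecond, ← sum_add_distrib]
          apply sum_congr rfl; intro j _
          rw [hrec]; ring

lemma vandermonde_range (a b n : ℕ) :
    ∑ k ∈ range (n + 1), a.choose k * b.choose (n - k) = (a + b).choose n := by
  rw [Nat.add_choose_eq, Finset.Nat.sum_antidiagonal_eq_sum_range_succ_mk]

lemma choose_mul_all (w j u : ℕ) :
    w.choose (j + u) * (j + u).choose j = w.choose j * (w - j).choose u := by
  rcases le_or_gt (j + u) w with h | h
  · have := @Nat.choose_mul w (j + u) j (Nat.le_add_right j u)
    simpa using this
  · rw [Nat.choose_eq_zero_of_lt h, Nat.zero_mul]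
    rcases le_or_gt j w with h2 | h2
    · rw [Nat.choose_eq_zero_of_lt (show w - j < u by omega), Nat.mul_zero]
    · rw [Nat.choose_eq_zero_of_lt h2, Nat.zero_mul]

lemma hyper_nat (T m w j : ℕ) (hw : w ≤ T) (hj : j ≤ m) :
    ∑ k ∈ range (m + 1), w.choose k * (T - w).choose (m - k) * k.choose j
      = w.choose j * (T - j).choose (m - j) := by
  have hsplit : ∑ k ∈ range (m + 1), w.choose k * (T - w).choose (m - k) * k.choose j
      = ∑ k ∈ Ico j (m + 1), w.choose k * (T - w).choose (m - k) * k.choose j := by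
    rw [range_eq_Ico, ← Finset.sum_Ico_consecutive _ (Nat.zero_le j) (by omega)]
    have h0 : ∑ k ∈ Ico 0 j, w.choose k * (T - w).choose (m - k) * k.choose j = 0 := by
      apply Finset.sum_eq_zero; intro k hk
      rw [mem_Ico] at hk
      rw [Nat.choose_eq_zero_of_lt hk.2, Nat.mul_zero]
    rw [h0, zero_add]
  rw [hsplit, Finset.sum_Ico_eq_sum_range]
  have hlen : m + 1 - j = (m - j) + 1 := by omega
  rw [hlen]
  have hterm : ∀ u, w.choose (j + u) * (T - w).choose (m - (j + u)) * (j + u).choose j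
      = w.choose j * ((w - j).choose u * (T - w).choose ((m - j) - u)) := by
    intro u
    have h1 : m - (j + u) = (m - j) - u := by omega
    rw [h1, mul_right_comm, choose_mul_all, mul_assoc]
  calc ∑ u ∈ range (m - j + 1), w.choose (j + u) * (T - w).choose (m - (j + u)) * (j + u).choose j
      = w.choose j * ∑ u ∈ range (m - j + 1), (w - j).choose u * (T - w).choose ((m - j) - u) := by
        rw [mul_sum]; exact Finset.sum_congr rfl fun u _ => hterm u
    _ = w.choose j * ((w - j) + (T - w)).choose (m - j) := by rw [vandermonde_range]
    _ = w.choose j * (T - j).choose (m - j) := by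
        rcases le_or_gt j w with h | h
        · congr 2; omega
        · rw [Nat.choose_eq_zero_of_lt h, Nat.zero_mul, Nat.zero_mul]

lemma hyper_real (T m w j : ℕ) (hw : w ≤ T) (hm : m ≤ T) :
    ∑ k ∈ range (m + 1),
        ((w.choose k * (T - w).choose (m - k) : ℕ) : ℝ) / (T.choose m : ℝ) * (k.choose j : ℝ)
      = (w.choose j : ℝ) * (m.choose j : ℝ) / (T.choose j : ℝ) := by
  rcases le_or_gt j m with hj | hj
  · have key := hyper_nat T m w j hw hj
    have hmul := @Nat.choose_mul T m j hj
    have hTm : (T.choose m : ℝ) ≠ 0 := Nat.cast_ne_zero.mpr (Nat.choose_pos hm).ne'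
    have hTj : (T.choose j : ℝ) ≠ 0 := Nat.cast_ne_zero.mpr (Nat.choose_pos (hj.trans hm)).ne'
    have hsum : ∑ k ∈ range (m + 1),
        ((w.choose k * (T - w).choose (m - k) : ℕ) : ℝ) / (T.choose m : ℝ) * (k.choose j : ℝ)
        = ((w.choose j * (T - j).choose (m - j) : ℕ) : ℝ) / (T.choose m : ℝ) := by
      rw [← key]
      push_cast
      rw [sum_div]
      apply sum_congr rfl; intro k _; ring
    rw [hsum]
    have hmulR : (T.choose m : ℝ) * (m.choose j : ℝ)
        = (T.choose j : ℝ) * ((T - j).choose (m - j) : ℝ) := by exact_mod_cast hmul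
    push_cast
    field_simp
    nlinarith [hmulR]
  · have hz : ∀ k ∈ range (m + 1), ((w.choose k * (T - w).choose (m - k) : ℕ) : ℝ) / (T.choose m : ℝ) * (k.choose j : ℝ) = 0 := by
      intro k hk
      rw [mem_range] at hk
      rw [Nat.choose_eq_zero_of_lt (show k < j by omega)]
      simp
    rw [sum_congr rfl hz, sum_const, smul_zero, Nat.choose_eq_zero_of_lt hj]
    simp

lemma stirling1_diag (n : ℕ) : stirling1 n n = 1 := by
  induction n with
  | zero => rfl
  | succ k ih =>
    show k * stirling1 k (k + 1) + stirling1 k k = 1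
    rw [stirling1_eq_zero_of_lt (Nat.lt_succ_self k), ih, Nat.mul_zero]

lemma stirling2_diag (n : ℕ) : stirling2 n n = 1 := by
  induction n with
  | zero => rfl
  | succ k ih =>
    show (k + 1) * stirling2 k (k + 1) + stirling2 k k = 1
    rw [stirling2_eq_zero_of_lt (Nat.lt_succ_self k), ih, Nat.mul_zero]

lemma stirling2_zero_right' (n : ℕ) (h : 1 ≤ n) : stirling2 n 0 = 0 := by
  cases n with
  | zero => omega
  | succ k => rfl

lemma neg_one_pow_congr' {a b : ℕ} (h : a % 2 = b % 2) : (-1 : ℝ) ^ a = (-1 : ℝ) ^ b := by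
  rcases Nat.even_or_odd a with ha | ha
  · rw [ha.neg_one_pow, (Nat.even_iff.mpr (by rw [← Nat.even_iff.mp ha]; omega)).neg_one_pow]
  · rw [ha.neg_one_pow, (Nat.odd_iff.mpr (by rw [← Nat.odd_iff.mp ha]; omega)).neg_one_pow]

noncomputable def FF (T m c s w : ℕ) (ℓ j t : ℕ) : ℝ :=
  (s.choose ℓ : ℝ) * (c : ℝ) ^ ℓ * (stirling2 ℓ j : ℝ) *
    ((-1 : ℝ) ^ (j + t) * (stirling1 j t : ℝ)) *
    ((m.choose j : ℝ) / (T.choose j : ℝ)) * (w : ℝ) ^ (s - ℓ + t)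

lemma reindexE (T m c s w : ℕ) (hs : 1 ≤ s) :
    ∑ ℓ ∈ range (s + 1), ∑ j ∈ range (ℓ + 1), ∑ t ∈ range (j + 1), FF T m c s w ℓ j t
      = (∑ ℓ ∈ range (s + 1), (c : ℝ) ^ ℓ * (s.choose ℓ * m.choose ℓ : ℝ) / (T.choose ℓ : ℝ)) * (w : ℝ) ^ s
        + ∑ i ∈ Finset.Icc 2 s, (∑ ℓ ∈ Finset.Icc i s, (s.choose ℓ : ℝ) * (c : ℝ) ^ ℓ *
            ∑ j ∈ Finset.Icc (ℓ + 1 - i) ℓ, (-1 : ℝ) ^ (j + i - 1 - ℓ) *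
              (stirling2 ℓ j * stirling1 j (ℓ + 1 - i) * m.choose j : ℝ) / (T.choose j : ℝ))
          * (w : ℝ) ^ (s + 1 - i) := by
  -- Step 1: reindex innermost sum t ↦ i = ℓ + 1 - t
  have step1 : ∀ ℓ ∈ range (s + 1), ∀ j ∈ range (ℓ + 1),
      ∑ t ∈ range (j + 1), FF T m c s w ℓ j t
        = ∑ i ∈ Icc (ℓ + 1 - j) (ℓ + 1), FF T m c s w ℓ j (ℓ + 1 - i) := by
    intro ℓ _ j hj
    rw [mem_range] at hj
    refine sum_nbij' (fun t => ℓ + 1 - t) (fun i => ℓ + 1 - i) ?_ ?_ ?_ ?_ ?_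
    · intro t ht; (try dsimp only); rw [mem_range] at ht; rw [mem_Icc]; omega
    · intro i hi; (try dsimp only); rw [mem_Icc] at hi; rw [mem_range]; omega
    · intro t ht; (try dsimp only); rw [mem_range] at ht; omega
    · intro i hi; (try dsimp only); rw [mem_Icc] at hi; omega
    · intro t ht; (try dsimp only); rw [mem_range] at ht
      congr 1; omega
  rw [sum_congr rfl (fun ℓ hℓ => sum_congr rfl (fun j hj => step1 ℓ hℓ j hj))]
  -- Step 2: swap j and i sums
  have step2 : ∀ ℓ ∈ range (s + 1),
      ∑ j ∈ range (ℓ + 1), ∑ i ∈ Icc (ℓ + 1 - j) (ℓ + 1), FF T m c s w ℓ j (ℓ + 1 - i)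
        = ∑ i ∈ Icc 1 (ℓ + 1), ∑ j ∈ Icc (ℓ + 1 - i) ℓ, FF T m c s w ℓ j (ℓ + 1 - i) := by
    intro ℓ _
    refine sum_comm' ?_
    intro j i
    simp only [mem_range, mem_Icc]
    omega
  rw [sum_congr rfl step2]
  -- Step 3: swap ℓ and i sums
  have step3 : ∑ ℓ ∈ range (s + 1), ∑ i ∈ Icc 1 (ℓ + 1), ∑ j ∈ Icc (ℓ + 1 - i) ℓ, FF T m c s w ℓ j (ℓ + 1 - i)
      = ∑ i ∈ Icc 1 (s + 1), ∑ ℓ ∈ Icc (i - 1) s, ∑ j ∈ Icc (ℓ + 1 - i) ℓ, FF T m c s w ℓ j (ℓ + 1 - i) := by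
    refine sum_comm' ?_
    intro ℓ i
    simp only [mem_range, mem_Icc]
    omega
  rw [step3]
  -- peel off i = 1
  have hset1 : Icc 1 (s + 1) = insert 1 (Icc 2 (s + 1)) := by
    ext x; simp only [mem_Icc, mem_insert]; omega
  rw [hset1, sum_insert (by simp)]
  -- the i = 1 term gives the alpha part
  have hi1 : ∑ ℓ ∈ Icc (1 - 1) s, ∑ j ∈ Icc (ℓ + 1 - 1) ℓ, FF T m c s w ℓ j (ℓ + 1 - 1)
      = (∑ ℓ ∈ range (s + 1), (c : ℝ) ^ ℓ * (s.choose ℓ * m.choose ℓ : ℝ) / (T.choose ℓ : ℝ)) * (w : ℝ) ^ s := by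
    have h0 : Icc (1 - 1) s = range (s + 1) := by ext x; simp only [mem_Icc, mem_range]; omega
    rw [h0, sum_mul]
    apply sum_congr rfl
    intro ℓ hℓ
    rw [mem_range] at hℓ
    have h1 : ℓ + 1 - 1 = ℓ := by omega
    rw [h1, Finset.Icc_self, sum_singleton]
    unfold FF
    rw [stirling1_diag, stirling2_diag, neg_one_pow_congr' (show (ℓ + ℓ) % 2 = 0 % 2 by omega),
      show s - ℓ + ℓ = s by omega]
    push_cast
    ring
  rw [hi1]
  -- peel off i = s + 1
  rw [Finset.sum_Icc_succ_top (show 2 ≤ s + 1 by omega)]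
  have htop : ∑ ℓ ∈ Icc (s + 1 - 1) s, ∑ j ∈ Icc (ℓ + 1 - (s + 1)) ℓ, FF T m c s w ℓ j (ℓ + 1 - (s + 1))
      = 0 := by
    apply sum_eq_zero
    intro ℓ hℓ
    rw [mem_Icc] at hℓ
    have hℓs : ℓ = s := by omega
    subst hℓs
    apply sum_eq_zero
    intro j hj
    rw [mem_Icc] at hj
    have ht0 : ℓ + 1 - (ℓ + 1) = 0 := by omega
    unfold FF
    rw [ht0]
    rcases Nat.eq_zero_or_pos j with hj0 | hj0
    · subst hj0
      rw [stirling2_zero_right' ℓ (by omega)]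
      simp
    · obtain ⟨j', rfl⟩ := Nat.exists_eq_succ_of_ne_zero (by omega : j ≠ 0)
      rw [stirling1_zero_right]
      simp
  rw [htop, add_zero]
  -- the remaining i ∈ Icc 2 s terms give the beta part
  congr 1
  apply sum_congr rfl
  intro i hi
  rw [mem_Icc] at hi
  -- peel off ℓ = i - 1 which vanishes
  have hset2 : Icc (i - 1) s = insert (i - 1) (Icc i s) := by
    ext x; simp only [mem_Icc, mem_insert]; omega
  rw [hset2, sum_insert (by rw [mem_Icc]; omega)]
  have hzero : ∑ j ∈ Icc (i - 1 + 1 - i) (i - 1), FF T m c s w (i - 1) j (i - 1 + 1 - i) = 0 := by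
    apply sum_eq_zero
    intro j hj
    have ht0 : i - 1 + 1 - i = 0 := by omega
    unfold FF
    rw [ht0]
    rcases Nat.eq_zero_or_pos j with hj0 | hj0
    · subst hj0
      rw [stirling2_zero_right' (i - 1) (by omega)]
      simp
    · obtain ⟨j', rfl⟩ := Nat.exists_eq_succ_of_ne_zero (by omega : j ≠ 0)
      rw [stirling1_zero_right]
      simp
  rw [hzero, zero_add, sum_mul]
  apply sum_congr rfl
  intro ℓ hℓ
  rw [mem_Icc] at hℓ
  rw [mul_sum, sum_mul]
  apply sum_congr rfl
  intro j hj
  rw [mem_Icc] at hj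
  unfold FF
  rw [show s - ℓ + (ℓ + 1 - i) = s + 1 - i by omega,
    neg_one_pow_congr' (show (j + (ℓ + 1 - i)) % 2 = (j + i - 1 - ℓ) % 2 by omega)]
  push_cast
  ring

lemma key_identity (T m c s w : ℕ) (hw : w ≤ T) (hm : m ≤ T) (hs : 1 ≤ s) :
    ∑ k ∈ range (m + 1),
        ((w.choose k * (T - w).choose (m - k) : ℕ) : ℝ) / (T.choose m : ℝ) * ((w : ℝ) + c * k) ^ s
      = (∑ ℓ ∈ range (s + 1), (c : ℝ) ^ ℓ * (s.choose ℓ * m.choose ℓ : ℝ) / (T.choose ℓ : ℝ)) * (w : ℝ) ^ s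
        + ∑ i ∈ Finset.Icc 2 s, (∑ ℓ ∈ Finset.Icc i s, (s.choose ℓ : ℝ) * (c : ℝ) ^ ℓ *
            ∑ j ∈ Finset.Icc (ℓ + 1 - i) ℓ, (-1 : ℝ) ^ (j + i - 1 - ℓ) *
              (stirling2 ℓ j * stirling1 j (ℓ + 1 - i) * m.choose j : ℝ) / (T.choose j : ℝ))
          * (w : ℝ) ^ (s + 1 - i) := by
  rw [← reindexE T m c s w hs]
  set weight : ℕ → ℝ := fun k => ((w.choose k * (T - w).choose (m - k) : ℕ) : ℝ) / (T.choose m : ℝ)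
    with hweight
  have hfact : ∀ j : ℕ, (j.factorial : ℝ) * (w.choose j : ℝ)
      = ∑ t ∈ range (j + 1), (-1 : ℝ) ^ (j + t) * (stirling1 j t : ℝ) * (w : ℝ) ^ t := by
    intro j
    have h1 : (j.factorial : ℝ) * (w.choose j : ℝ) = ((w.descFactorial j : ℕ) : ℝ) := by
      rw [Nat.descFactorial_eq_factorial_mul_choose]; push_cast; ring
    rw [h1, cast_descFactorial, falling_eq]
  have hinner : ∀ ℓ : ℕ, ∑ k ∈ range (m + 1), weight k * (k : ℝ) ^ ℓ
      = ∑ j ∈ range (ℓ + 1), (stirling2 ℓ j : ℝ) *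
          (∑ t ∈ range (j + 1), (-1 : ℝ) ^ (j + t) * (stirling1 j t : ℝ) * (w : ℝ) ^ t) *
          ((m.choose j : ℝ) / (T.choose j : ℝ)) := by
    intro ℓ
    calc ∑ k ∈ range (m + 1), weight k * (k : ℝ) ^ ℓ
        = ∑ k ∈ range (m + 1), ∑ j ∈ range (ℓ + 1),
            (stirling2 ℓ j : ℝ) * (j.factorial : ℝ) * (weight k * (k.choose j : ℝ)) := by
          apply sum_congr rfl; intro k _
          rw [pow_eq_stirling2_sum ℓ k, mul_sum]
          apply sum_congr rfl; intro j _; push_cast; ring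
      _ = ∑ j ∈ range (ℓ + 1), (stirling2 ℓ j : ℝ) * (j.factorial : ℝ) *
            ∑ k ∈ range (m + 1), weight k * (k.choose j : ℝ) := by
          rw [Finset.sum_comm]
          apply sum_congr rfl; intro j _; rw [mul_sum]
      _ = ∑ j ∈ range (ℓ + 1), (stirling2 ℓ j : ℝ) * (j.factorial : ℝ) *
            ((w.choose j : ℝ) * (m.choose j : ℝ) / (T.choose j : ℝ)) := by
          apply sum_congr rfl; intro j _
          rw [hweight]
          rw [hyper_real T m w j hw hm]
      _ = _ := by
          apply sum_congr rfl; intro j _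
          rw [← hfact j]  -- replace below
          ring
  calc ∑ k ∈ range (m + 1), weight k * ((w : ℝ) + c * k) ^ s
      = ∑ k ∈ range (m + 1), ∑ ℓ ∈ range (s + 1),
          ((s.choose ℓ : ℝ) * (c : ℝ) ^ ℓ * (w : ℝ) ^ (s - ℓ)) * (weight k * (k : ℝ) ^ ℓ) := by
        apply sum_congr rfl; intro k _
        rw [add_comm ((w : ℝ)), add_pow, mul_sum]
        apply sum_congr rfl; intro ℓ _
        rw [mul_pow]; ring
    _ = ∑ ℓ ∈ range (s + 1), ((s.choose ℓ : ℝ) * (c : ℝ) ^ ℓ * (w : ℝ) ^ (s - ℓ)) *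
          ∑ k ∈ range (m + 1), weight k * (k : ℝ) ^ ℓ := by
        rw [Finset.sum_comm]
        apply sum_congr rfl; intro ℓ _; rw [mul_sum]
    _ = ∑ ℓ ∈ range (s + 1), ∑ j ∈ range (ℓ + 1), ∑ t ∈ range (j + 1), FF T m c s w ℓ j t := by
        apply sum_congr rfl; intro ℓ _
        rw [hinner ℓ, mul_sum]
        apply sum_congr rfl; intro j _
        rw [mul_sum, sum_mul, mul_sum]
        apply sum_congr rfl; intro t _
        unfold FF
        rw [pow_add (w : ℝ) (s - ℓ) t]
        ring

lemma mom_rec (W0 B0 m c : ℕ) (hT0 : m ≤ W0 + B0) (n s : ℕ) (hs : 1 ≤ s) :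
    momM W0 B0 m c s (n + 1)
      = alphaM W0 B0 m c n s * momM W0 B0 m c s n + betaM W0 B0 m c n s := by
  set T := urnT W0 B0 m c n with hT
  have hmT : m ≤ T := by rw [hT]; unfold urnT; omega
  have hT1 : urnT W0 B0 m c (n + 1) = T + m * c := by rw [hT]; unfold urnT; ring
  have step1 : momM W0 B0 m c s (n + 1)
      = ∑ w ∈ range (T + 1), massM W0 B0 m c n w *
          ∑ k ∈ range (m + 1),
            ((w.choose k * (T - w).choose (m - k) : ℕ) : ℝ) / (T.choose m : ℝ) *
              ((w : ℝ) + c * k) ^ s := by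
    unfold momM
    rw [hT1]
    calc ∑ v ∈ range (T + m * c + 1), massM W0 B0 m c (n + 1) v * (v : ℝ) ^ s
        = ∑ v ∈ range (T + m * c + 1), ∑ w ∈ range (T + 1), ∑ k ∈ range (m + 1),
            (if v = w + c * k then
              massM W0 B0 m c n w *
                ((w.choose k * (T - w).choose (m - k) : ℝ) / (T.choose m : ℝ)) * (v : ℝ) ^ s
            else 0) := by
          apply sum_congr rfl; intro v _
          show massM W0 B0 m c (n + 1) v * (v : ℝ) ^ s = _
          rw [massM]
          rw [sum_mul]
          apply sum_congr rfl; intro w _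
          rw [sum_mul]
          apply sum_congr rfl; intro k _
          rw [ite_mul, zero_mul]
        _ = ∑ w ∈ range (T + 1), ∑ k ∈ range (m + 1), ∑ v ∈ range (T + m * c + 1),
            (if v = w + c * k then
              massM W0 B0 m c n w *
                ((w.choose k * (T - w).choose (m - k) : ℝ) / (T.choose m : ℝ)) * (v : ℝ) ^ s
            else 0) := by
          rw [Finset.sum_comm]
          apply sum_congr rfl; intro w _
          rw [Finset.sum_comm]
        _ = ∑ w ∈ range (T + 1), ∑ k ∈ range (m + 1),
            massM W0 B0 m c n w *
              ((w.choose k * (T - w).choose (m - k) : ℝ) / (T.choose m : ℝ))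
                * ((w + c * k : ℕ) : ℝ) ^ s := by
          apply sum_congr rfl; intro w hw
          apply sum_congr rfl; intro k hk
          rw [mem_range] at hw hk
          have hmem : w + c * k ∈ range (T + m * c + 1) := by
            rw [mem_range]
            have : c * k ≤ c * m := Nat.mul_le_mul_left c (by omega)
            have : c * m = m * c := Nat.mul_comm c m
            omega
          rw [Finset.sum_ite_eq' (range (T + m * c + 1)) (w + c * k)
            (fun v => massM W0 B0 m c n w *
              ((w.choose k * (T - w).choose (m - k) : ℝ) / (T.choose m : ℝ)) * (v : ℝ) ^ s),
            if_pos hmem]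
        _ = _ := by
          apply sum_congr rfl; intro w _
          rw [mul_sum]
          apply sum_congr rfl; intro k _
          push_cast
          ring
  rw [step1]
  have step2 : ∀ w ∈ range (T + 1),
      massM W0 B0 m c n w *
          ∑ k ∈ range (m + 1),
            ((w.choose k * (T - w).choose (m - k) : ℕ) : ℝ) / (T.choose m : ℝ) *
              ((w : ℝ) + c * k) ^ s
        = massM W0 B0 m c n w *
            ((∑ ℓ ∈ range (s + 1), (c : ℝ) ^ ℓ * (s.choose ℓ * m.choose ℓ : ℝ) / (T.choose ℓ : ℝ)) * (w : ℝ) ^ s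
              + ∑ i ∈ Finset.Icc 2 s, (∑ ℓ ∈ Finset.Icc i s, (s.choose ℓ : ℝ) * (c : ℝ) ^ ℓ *
                  ∑ j ∈ Finset.Icc (ℓ + 1 - i) ℓ, (-1 : ℝ) ^ (j + i - 1 - ℓ) *
                    (stirling2 ℓ j * stirling1 j (ℓ + 1 - i) * m.choose j : ℝ) / (T.choose j : ℝ))
                * (w : ℝ) ^ (s + 1 - i)) := by
    intro w hw
    rw [mem_range] at hw
    rw [key_identity T m c s w (by omega) hmT hs]
  rw [sum_congr rfl step2]
  unfold alphaM betaM momM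
  rw [← hT]
  simp only [mul_add]
  rw [sum_add_distrib]
  congr 1
  · rw [mul_sum]
    apply sum_congr rfl; intro w _
    ring
  · calc ∑ w ∈ range (T + 1), massM W0 B0 m c n w *
          ∑ i ∈ Finset.Icc 2 s, (∑ ℓ ∈ Finset.Icc i s, (s.choose ℓ : ℝ) * (c : ℝ) ^ ℓ *
              ∑ j ∈ Finset.Icc (ℓ + 1 - i) ℓ, (-1 : ℝ) ^ (j + i - 1 - ℓ) *
                (stirling2 ℓ j * stirling1 j (ℓ + 1 - i) * m.choose j : ℝ) / (T.choose j : ℝ))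
            * (w : ℝ) ^ (s + 1 - i)
        = ∑ w ∈ range (T + 1), ∑ i ∈ Finset.Icc 2 s,
            massM W0 B0 m c n w * ((∑ ℓ ∈ Finset.Icc i s, (s.choose ℓ : ℝ) * (c : ℝ) ^ ℓ *
              ∑ j ∈ Finset.Icc (ℓ + 1 - i) ℓ, (-1 : ℝ) ^ (j + i - 1 - ℓ) *
                (stirling2 ℓ j * stirling1 j (ℓ + 1 - i) * m.choose j : ℝ) / (T.choose j : ℝ))
            * (w : ℝ) ^ (s + 1 - i)) := by
          apply sum_congr rfl; intro w _; rw [mul_sum]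
      _ = ∑ i ∈ Finset.Icc 2 s, ∑ w ∈ range (T + 1),
            massM W0 B0 m c n w * ((∑ ℓ ∈ Finset.Icc i s, (s.choose ℓ : ℝ) * (c : ℝ) ^ ℓ *
              ∑ j ∈ Finset.Icc (ℓ + 1 - i) ℓ, (-1 : ℝ) ^ (j + i - 1 - ℓ) *
                (stirling2 ℓ j * stirling1 j (ℓ + 1 - i) * m.choose j : ℝ) / (T.choose j : ℝ))
            * (w : ℝ) ^ (s + 1 - i)) := Finset.sum_comm
      _ = _ := by
          apply sum_congr rfl; intro i _
          rw [sum_mul]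
          apply sum_congr rfl; intro w _
          ring

lemma momM_zero (W0 B0 m c s : ℕ) : momM W0 B0 m c s 0 = (W0 : ℝ) ^ s := by
  unfold momM
  have hmem : W0 ∈ range (urnT W0 B0 m c 0 + 1) := by
    rw [mem_range]; unfold urnT; omega
  calc ∑ w ∈ range (urnT W0 B0 m c 0 + 1), massM W0 B0 m c 0 w * (w : ℝ) ^ s
      = ∑ w ∈ range (urnT W0 B0 m c 0 + 1), (if w = W0 then ((w : ℝ)) ^ s else 0) := by
        apply sum_congr rfl; intro w _
        rw [massM]
        by_cases h : w = W0 <;> simp [h]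
    _ = (W0 : ℝ) ^ s := by
        rw [Finset.sum_ite_eq' (range (urnT W0 B0 m c 0 + 1)) W0 (fun w => ((w : ℝ)) ^ s),
          if_pos hmem]

lemma one_le_alpha (W0 B0 m c j s : ℕ) : (1 : ℝ) ≤ alphaM W0 B0 m c j s := by
  unfold alphaM
  have h0 : (0 : ℕ) ∈ range (s + 1) := by simp
  have hkey := Finset.single_le_sum (f := fun ℓ =>
    (c : ℝ) ^ ℓ * (Nat.choose s ℓ * Nat.choose m ℓ : ℝ) /
      (Nat.choose (urnT W0 B0 m c j) ℓ : ℝ)) (fun i _ => by positivity) h0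
  simpa using hkey

lemma alpha_ne_zero (W0 B0 m c j s : ℕ) : alphaM W0 B0 m c j s ≠ 0 := by
  have := one_le_alpha W0 B0 m c j s; linarith


/-- In model `M`, the closed form for the `s`-th moment:
`E(W_n^s) = (∏_{j<n} α_{j,s}) · (W_0^s + Σ_{ℓ<n} β_{ℓ,s}/∏_{j≤ℓ} α_{j,s})`. -/
theorem modelM_moment_closedForm (W0 B0 m c : ℕ) (hm : 1 ≤ m) (hc : 1 ≤ c)
    (hW0 : 1 ≤ W0) (hB0 : 1 ≤ B0) (hT0 : m ≤ W0 + B0) :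
    ∀ n s : ℕ, 1 ≤ s →
      momM W0 B0 m c s n =
        (∏ j ∈ Finset.range n, alphaM W0 B0 m c j s) *
          ((W0 : ℝ) ^ s + ∑ ℓ ∈ Finset.range n,
            betaM W0 B0 m c ℓ s / ∏ j ∈ Finset.range (ℓ + 1), alphaM W0 B0 m c j s) := by
  intro n s hs
  induction n with
  | zero => simp [momM_zero]
  | succ n ih =>
    rw [mom_rec W0 B0 m c hT0 n s hs, ih, sum_range_succ]
    have hP : (∏ j ∈ range (n + 1), alphaM W0 B0 m c j s) ≠ 0 :=
      prod_ne_zero_iff.mpr fun j _ => alpha_ne_zero W0 B0 m c j s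
    rw [mul_add (∏ j ∈ range (n + 1), alphaM W0 B0 m c j s) ((W0 : ℝ) ^ s),
      mul_add (∏ j ∈ range (n + 1), alphaM W0 B0 m c j s)
        (∑ ℓ ∈ range n, betaM W0 B0 m c ℓ s / ∏ j ∈ range (ℓ + 1), alphaM W0 B0 m c j s),
      mul_div_cancel₀ _ hP, prod_range_succ]
    ring
end

section
/- In model M, the normalized expectation converges: lim_{n→∞} E(W_n)/n = W_0·m·c/T_0. -/
open Finset

/-- Vandermonde convolution in the form needed here. -/
lemma urn_vand (w T m : ℕ) (hw : w ≤ T) :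
    ∑ k ∈ range (m+1), w.choose k * (T-w).choose (m-k) = T.choose m := by
  have h := Nat.add_choose_eq w (T - w) m
  rw [Nat.add_sub_cancel' hw] at h
  rw [h, Finset.Nat.sum_antidiagonal_eq_sum_range_succ_mk]

/-- First moment of the hypergeometric weights (unnormalized). -/
lemma urn_mean (w T m : ℕ) (hw : w ≤ T) (hm : 1 ≤ m) :
    ∑ k ∈ range (m+1), k * (w.choose k * (T-w).choose (m-k))
      = w * (T-1).choose (m-1) := by
  rcases Nat.eq_zero_or_pos w with rfl | hw1
  · rw [Finset.sum_eq_zero]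
    · simp
    intro k hk
    rcases Nat.eq_zero_or_pos k with rfl | hk1
    · simp
    · simp [Nat.choose_eq_zero_of_lt hk1]
  · obtain ⟨w', rfl⟩ : ∃ w', w = w' + 1 := ⟨w - 1, by omega⟩
    obtain ⟨m', rfl⟩ : ∃ m', m = m' + 1 := ⟨m - 1, by omega⟩
    rw [Finset.sum_range_succ']
    simp only [Nat.mul_zero, Nat.zero_mul, add_zero]
    have key : ∀ j, (j+1) * ((w'+1).choose (j+1) * (T-(w'+1)).choose (m'+1-(j+1)))
        = (w'+1) * (w'.choose j * (T-(w'+1)).choose (m'-j)) := by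
      intro j
      have h := Nat.add_one_mul_choose_eq w' j
      have h2 : m' + 1 - (j+1) = m' - j := by omega
      rw [h2]
      calc (j+1) * ((w'+1).choose (j+1) * (T - (w'+1)).choose (m'-j))
          = ((w'+1).choose (j+1) * (j+1)) * (T - (w'+1)).choose (m'-j) := by ring
        _ = ((w'+1) * w'.choose j) * (T - (w'+1)).choose (m'-j) := by rw [← h]
        _ = (w'+1) * (w'.choose j * (T - (w'+1)).choose (m'-j)) := by ring
    rw [Finset.sum_congr rfl (fun j _ => key j), ← Finset.mul_sum]
    have hT : T - (w'+1) = (T-1) - w' := by omega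
    have hwT : w' ≤ T - 1 := by omega
    rw [hT, urn_vand w' (T-1) m' hwT]
    simp

lemma urn_mCh (T m : ℕ) (hm : 1 ≤ m) : m * T.choose m = T * (T-1).choose (m-1) := by
  rcases Nat.eq_zero_or_pos T with rfl | hT
  · simp [Nat.choose_eq_zero_of_lt hm]
  obtain ⟨T', rfl⟩ : ∃ T', T = T' + 1 := ⟨T - 1, by omega⟩
  obtain ⟨m', rfl⟩ : ∃ m', m = m' + 1 := ⟨m - 1, by omega⟩
  have h := Nat.add_one_mul_choose_eq T' m'
  simp only [Nat.add_sub_cancel]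
  rw [h]; ring

lemma urn_key_nat (w T m c : ℕ) (hw : w ≤ T) (hm : 1 ≤ m) :
    T * ∑ k ∈ range (m+1), (w + c*k) * (w.choose k * (T-w).choose (m-k))
      = w * (T + m*c) * T.choose m := by
  have expand : ∑ k ∈ range (m+1), (w + c*k) * (w.choose k * (T-w).choose (m-k))
      = w * (∑ k ∈ range (m+1), w.choose k * (T-w).choose (m-k))
        + c * ∑ k ∈ range (m+1), k * (w.choose k * (T-w).choose (m-k)) := by
    rw [Finset.mul_sum, Finset.mul_sum, ← Finset.sum_add_distrib]
    exact Finset.sum_congr rfl fun k _ => by ring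
  rw [expand, urn_vand w T m hw, urn_mean w T m hw hm]
  have h := urn_mCh T m hm
  calc T * (w * T.choose m + c * (w * (T-1).choose (m-1)))
      = w * T * T.choose m + w * c * (T * (T-1).choose (m-1)) := by ring
    _ = w * T * T.choose m + w * c * (m * T.choose m) := by rw [← h]
    _ = w * (T + m*c) * T.choose m := by ring

lemma urn_key_real (w T m c : ℕ) (hw : w ≤ T) (hm : 1 ≤ m) (hmT : m ≤ T) :
    ∑ k ∈ range (m+1),
        ((w.choose k * (T-w).choose (m-k) : ℝ) / (T.choose m : ℝ)) * ((w : ℝ) + c*k)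
      = w * (T + m*c) / T := by
  have hT : 0 < T := lt_of_lt_of_le hm hmT
  have hch : 0 < T.choose m := Nat.choose_pos hmT
  have hTR : (T:ℝ) ≠ 0 := Nat.cast_ne_zero.mpr hT.ne'
  have hchR : (T.choose m : ℝ) ≠ 0 := Nat.cast_ne_zero.mpr hch.ne'
  have h := urn_key_nat w T m c hw hm
  have hR : (T:ℝ) * ∑ k ∈ range (m+1),
      ((w:ℝ) + c*k) * ((w.choose k : ℝ) * ((T-w).choose (m-k) : ℝ))
      = (w:ℝ) * ((T:ℝ) + m*c) * (T.choose m : ℝ) := by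
    exact_mod_cast congrArg (Nat.cast : ℕ → ℝ) h
  have hsum : ∑ k ∈ range (m+1),
        ((w.choose k * (T-w).choose (m-k) : ℝ) / (T.choose m : ℝ)) * ((w : ℝ) + c*k)
      = (∑ k ∈ range (m+1),
        ((w:ℝ) + c*k) * ((w.choose k : ℝ) * ((T-w).choose (m-k) : ℝ))) / (T.choose m : ℝ) := by
    rw [Finset.sum_div]
    exact Finset.sum_congr rfl fun k _ => by ring
  rw [hsum]
  field_simp at hR ⊢
  linarith [hR]

lemma momM_step (W0 B0 m c n : ℕ) (hm : 1 ≤ m) (hT0 : m ≤ W0 + B0) :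
    momM W0 B0 m c 1 (n+1)
      = momM W0 B0 m c 1 n * ((urnT W0 B0 m c n : ℝ) + m*c) / (urnT W0 B0 m c n : ℝ) := by
  set T := urnT W0 B0 m c n with hTdef
  have hmT : m ≤ T := le_trans hT0 (by simp [hTdef, urnT])
  have hstep : urnT W0 B0 m c (n+1) = T + m*c := by simp [hTdef, urnT]; ring
  rw [momM]
  simp only [massM, pow_one]
  have h1 : ∀ v ∈ range (urnT W0 B0 m c (n+1) + 1),
      (∑ w ∈ range (T + 1), ∑ k ∈ range (m + 1),
        if v = w + c * k then
          massM W0 B0 m c n w *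
            ((w.choose k * (T-w).choose (m-k) : ℝ) / (T.choose m : ℝ)) else 0) * (v:ℝ)
      = ∑ w ∈ range (T + 1), ∑ k ∈ range (m + 1),
        (if v = w + c * k then
          massM W0 B0 m c n w *
            ((w.choose k * (T-w).choose (m-k) : ℝ) / (T.choose m : ℝ)) * (v:ℝ) else 0) := by
    intro v _
    rw [Finset.sum_mul]
    exact Finset.sum_congr rfl fun w _ => by
      rw [Finset.sum_mul]
      exact Finset.sum_congr rfl fun k _ => by split <;> simp
  rw [Finset.sum_congr rfl h1]
  rw [Finset.sum_comm]
  have h2 : ∀ w ∈ range (T + 1),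
      (∑ v ∈ range (urnT W0 B0 m c (n+1) + 1), ∑ k ∈ range (m+1),
        (if v = w + c * k then
          massM W0 B0 m c n w *
            ((w.choose k * (T-w).choose (m-k) : ℝ) / (T.choose m : ℝ)) * (v:ℝ) else 0))
      = massM W0 B0 m c n w * ((w:ℝ) * ((T:ℝ) + m*c) / (T:ℝ)) := by
    intro w hw
    have hwle : w ≤ T := Nat.lt_succ_iff.mp (Finset.mem_range.mp hw)
    rw [Finset.sum_comm]
    have h3 : ∀ k ∈ range (m+1),
        (∑ v ∈ range (urnT W0 B0 m c (n+1) + 1),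
          (if v = w + c * k then
            massM W0 B0 m c n w *
              ((w.choose k * (T-w).choose (m-k) : ℝ) / (T.choose m : ℝ)) * (v:ℝ) else 0))
        = massM W0 B0 m c n w *
            (((w.choose k * (T-w).choose (m-k) : ℝ) / (T.choose m : ℝ)) * ((w:ℝ) + c*k)) := by
      intro k hk
      have hkm : k ≤ m := Nat.lt_succ_iff.mp (Finset.mem_range.mp hk)
      have hmem : w + c * k ∈ range (urnT W0 B0 m c (n+1) + 1) := by
        rw [Finset.mem_range, hstep]
        have : c * k ≤ c * m := Nat.mul_le_mul_left c hkm
        have hcm : c * m = m * c := Nat.mul_comm c m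
        omega
      rw [Finset.sum_ite_eq' (range (urnT W0 B0 m c (n+1) + 1)) (w + c*k)]
      rw [if_pos hmem]
      push_cast
      ring
    rw [Finset.sum_congr rfl h3, ← Finset.mul_sum, urn_key_real w T m c hwle hm hmT]
  rw [Finset.sum_congr rfl h2]
  rw [momM]
  rw [Finset.sum_mul, Finset.sum_div]
  exact Finset.sum_congr rfl fun w _ => by rw [pow_one]; ring

lemma momM_closed (W0 B0 m c : ℕ) (hm : 1 ≤ m) (hW0 : 1 ≤ W0) (hB0 : 1 ≤ B0)
    (hT0 : m ≤ W0 + B0) (n : ℕ) :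
    momM W0 B0 m c 1 n = (W0 : ℝ) * (urnT W0 B0 m c n : ℝ) / ((W0 : ℝ) + B0) := by
  induction n with
  | zero =>
    rw [momM]
    simp only [massM, pow_one]
    have hmem : W0 ∈ range (urnT W0 B0 m c 0 + 1) := by
      rw [Finset.mem_range]; simp [urnT]
    have : ∀ w ∈ range (urnT W0 B0 m c 0 + 1),
        (if w = W0 then (1:ℝ) else 0) * (w:ℝ) = (if w = W0 then (w:ℝ) else 0) := by
      intro w _; split <;> simp
    rw [Finset.sum_congr rfl this, Finset.sum_ite_eq' _ W0, if_pos hmem]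
    have hT0R : ((W0:ℝ) + B0) ≠ 0 := by positivity
    have : (urnT W0 B0 m c 0 : ℝ) = (W0:ℝ) + B0 := by simp [urnT]
    rw [this]
    field_simp
  | succ n ih =>
    rw [momM_step W0 B0 m c n hm hT0, ih]
    have hTpos : 0 < urnT W0 B0 m c n := by simp [urnT]; omega
    have hTR : (urnT W0 B0 m c n : ℝ) ≠ 0 := Nat.cast_ne_zero.mpr hTpos.ne'
    have hT0R : ((W0:ℝ) + B0) ≠ 0 := by positivity
    have hnext : (urnT W0 B0 m c (n+1) : ℝ) = (urnT W0 B0 m c n : ℝ) + m*c := by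
      have : urnT W0 B0 m c (n+1) = urnT W0 B0 m c n + m*c := by simp [urnT]; ring
      rw [this]; push_cast; ring
    rw [hnext]
    field_simp

/-- In model `M`, the normalized expectation converges:
`lim_{n→∞} E(W_n)/n = W_0·m·c/T_0`. -/
theorem modelM_expectation_limit (W0 B0 m c : ℕ) (hm : 1 ≤ m) (hc : 1 ≤ c)
    (hW0 : 1 ≤ W0) (hB0 : 1 ≤ B0) (hT0 : m ≤ W0 + B0) :
    Filter.Tendsto (fun n : ℕ => momM W0 B0 m c 1 n / (n : ℝ)) Filter.atTop
      (nhds ((W0 : ℝ) * m * c / ((W0 : ℝ) + B0))) := by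
  have hT0R : ((W0:ℝ) + B0) ≠ 0 := by positivity
  have hg : Filter.Tendsto
      (fun n : ℕ => (W0 : ℝ) * m * c / ((W0 : ℝ) + B0) + (W0:ℝ) / ((W0:ℝ)+B0) * ((W0:ℝ)+B0) * (1/(n:ℝ)))
      Filter.atTop (nhds ((W0 : ℝ) * m * c / ((W0 : ℝ) + B0))) := by
    have h0 : Filter.Tendsto (fun n : ℕ => (1:ℝ)/(n:ℝ)) Filter.atTop (nhds 0) :=
      tendsto_one_div_atTop_nhds_zero_nat
    have := (h0.const_mul ((W0:ℝ) / ((W0:ℝ)+B0) * ((W0:ℝ)+B0))).const_add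
      ((W0 : ℝ) * m * c / ((W0 : ℝ) + B0))
    simpa using this
  refine hg.congr' ?_
  filter_upwards [Filter.eventually_ge_atTop 1] with n hn
  have hnR : (n:ℝ) ≠ 0 := by
    have : (0:ℝ) < n := by exact_mod_cast hn
    exact this.ne'
  rw [momM_closed W0 B0 m c hm hW0 hB0 hT0 n]
  have hcast : (urnT W0 B0 m c n : ℝ) = (W0:ℝ) + B0 + n*m*c := by
    simp [urnT]
  rw [hcast]
  field_simp
  ring
end
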